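/- For every a ∈ ℕ there exist polynomials P_{a,ℓ,m,n} ∈ ℚ[x], indexed by integers ℓ ≥ 0, n ≥ a(a+1)/2 and n²/a ≤ m ≤ n², each of degree at most ℓ, such that for all k ∈ ℤ, r, s ∈ ℕ and N ∈ ℕ₀, d_{a,k,r,s}(N) = Σ P_{a,ℓ,m,n}(k), the sum running over all triples (ℓ, m, n) with ℓ ≥ 0, n ≥ a(a+1)/2, n²/a ≤ m ≤ n² and mr + ns + ℓ = N. -/

import Mathlib

open PowerSeries Finset
open scoped Classical

noncomputable section

/-- `(1 - q^n)^(-k)` in `ℚ⟦q⟧`, for `k : ℤ` (for negative `k` this is the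
power `(1 - q^n)^{|k|}`). -/
def dFac (n : ℕ) (k : ℤ) : PowerSeries ℚ :=
  if 0 ≤ k then ((1 - (X : PowerSeries ℚ) ^ n)⁻¹) ^ k.toNat
  else (1 - (X : PowerSeries ℚ) ^ n) ^ (-k).toNat

/-- Strictly increasing `a`-tuples `1 ≤ n₁ < n₂ < ⋯ < n_a ≤ N`. -/
def strictTuples (a N : ℕ) : Finset (Fin a → ℕ) :=
  (Fintype.piFinset fun _ : Fin a => Finset.Icc 1 N).filter fun f => StrictMono f

/-- The coefficient `d_{a,k,r,s}(N)` of `q^N` in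
`ℬ_{a,k,r,s}(q) = Σ_{1≤n₁<⋯<n_a} q^{r(n₁²+⋯+n_a²)+s(n₁+⋯+n_a)} / ∏_j (1-q^{n_j})^k`.
Since `r, s ≥ 1`, tuples containing an entry `> N` contribute `0` to the coefficient of `q^N`,
so the (q-adically convergent) infinite sum can be truncated to entries in `[1, N]`. -/
def Bcoeff (a : ℕ) (k : ℤ) (r s : ℕ) (N : ℕ) : ℚ :=
  ∑ f ∈ strictTuples a N,
    PowerSeries.coeff N
      ((X : PowerSeries ℚ) ^ (r * (∑ j, (f j) ^ 2) + s * ∑ j, f j) * ∏ j, dFac (f j) k)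




lemma desc_diff (j : ℕ) (x : ℚ) :
    (descPochhammer ℚ (j+1)).eval (x+1) - (descPochhammer ℚ (j+1)).eval x
      = (j+1) * (descPochhammer ℚ j).eval x := by
  have h1 : (descPochhammer ℚ (j+1)).eval (x+1) = (x+1) * (descPochhammer ℚ j).eval x := by
    rw [descPochhammer_succ_left]
    simp [Polynomial.eval_comp]
  have h2 : (descPochhammer ℚ (j+1)).eval x = (descPochhammer ℚ j).eval x * (x - j) := by
    rw [descPochhammer_succ_right]
    simp
  rw [h1, h2]; ring

/-- Antidifference of polynomials over ℚ. -/
lemma exists_antidiff : ∀ (d : ℕ) (H : Polynomial ℚ), H.degree ≤ d →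
    ∃ G : Polynomial ℚ, G.degree ≤ (d+1 : ℕ) ∧
      ∀ x : ℚ, G.eval (x+1) - G.eval x = H.eval x := by
  intro d
  induction d with
  | zero =>
    intro H hH
    have hHC := Polynomial.eq_C_of_degree_le_zero (p := H) (by exact_mod_cast hH)
    rw [hHC]; set c := H.coeff 0
    refine ⟨Polynomial.C c * Polynomial.X, ?_, fun x => by simp; ring⟩
    calc (Polynomial.C c * Polynomial.X : Polynomial ℚ).degree
        ≤ (Polynomial.C c).degree + Polynomial.X.degree := Polynomial.degree_mul_le _ _
      _ ≤ 0 + 1 := add_le_add Polynomial.degree_C_le Polynomial.degree_X_le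
      _ = ((0+1 : ℕ) : WithBot ℕ) := by norm_num
  | succ d ih =>
    intro H hH
    by_cases hd : H.degree ≤ d
    · obtain ⟨G, hG, hGe⟩ := ih H hd
      have hmono : ((d+1:ℕ) : WithBot ℕ) ≤ ((d+1+1:ℕ) : WithBot ℕ) := by
        exact_mod_cast Nat.le_succ (d+1)
      exact ⟨G, hG.trans hmono, hGe⟩
    · have hH0 : H ≠ 0 := by rintro rfl; simp at hd
      have hdeg : H.natDegree = d + 1 := by
        have h1 : H.natDegree ≤ d + 1 := Polynomial.natDegree_le_iff_degree_le.mpr hH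
        have h2 : ¬ H.natDegree ≤ d := fun h =>
          hd (Polynomial.natDegree_le_iff_degree_le.mp h)
        omega
      have hc : H.leadingCoeff ≠ 0 := Polynomial.leadingCoeff_ne_zero.mpr hH0
      set c := H.leadingCoeff with hcdef
      set D : Polynomial ℚ := descPochhammer ℚ (d+1) with hD
      have hDmonic : D.Monic := monic_descPochhammer ℚ (d+1)
      have hDdeg : D.natDegree = d + 1 := descPochhammer_natDegree (d+1) (R := ℚ)
      have hdegeq : H.degree = (Polynomial.C c * D).degree := by
        rw [Polynomial.degree_C_mul hc, Polynomial.degree_eq_natDegree hH0,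
          Polynomial.degree_eq_natDegree hDmonic.ne_zero, hdeg, hDdeg]
      have hlceq : H.leadingCoeff = (Polynomial.C c * D).leadingCoeff := by
        rw [Polynomial.leadingCoeff_mul, Polynomial.leadingCoeff_C, hDmonic.leadingCoeff, mul_one]
      have hsub : (H - Polynomial.C c * D).degree ≤ (d : WithBot ℕ) := by
        have h := Polynomial.degree_sub_lt hdegeq hH0 hlceq
        rw [Polynomial.degree_eq_natDegree hH0, hdeg] at h
        exact Order.le_of_lt_succ (by exact_mod_cast h)
      obtain ⟨G', hG', hG'e⟩ := ih _ hsub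
      refine ⟨G' + Polynomial.C (c / (d+2)) * descPochhammer ℚ (d+2), ?_, ?_⟩
      · apply (Polynomial.degree_add_le _ _).trans
        have hmono : ((d+1:ℕ) : WithBot ℕ) ≤ ((d+1+1:ℕ) : WithBot ℕ) := by
          exact_mod_cast Nat.le_succ (d+1)
        apply max_le (hG'.trans hmono)
        apply (Polynomial.degree_mul_le _ _).trans
        calc (Polynomial.C (c/(d+2))).degree + (descPochhammer ℚ (d+2)).degree
            ≤ 0 + ((d+2 : ℕ) : WithBot ℕ) := add_le_add Polynomial.degree_C_le
              (by rw [Polynomial.degree_eq_natDegree (monic_descPochhammer ℚ (d+2)).ne_zero,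
                    descPochhammer_natDegree])
          _ = ((d+1+1 : ℕ) : WithBot ℕ) := by push_cast; ring
      · intro x
        have h1 := hG'e x
        have e2 : d + 1 + 1 = d + 2 := rfl
        have hdd := desc_diff (d+1) x
        rw [e2] at hdd
        have hd2 : ((d:ℚ) + 2) ≠ 0 := by positivity
        have hkey : c / ((d:ℚ)+2) * ((descPochhammer ℚ (d+2)).eval (x+1)
            - (descPochhammer ℚ (d+2)).eval x) = c * (descPochhammer ℚ (d+1)).eval x := by
          rw [hdd]; push_cast; field_simp; ring
        simp only [hD, Polynomial.eval_add, Polynomial.eval_mul, Polynomial.eval_C,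
          Polynomial.eval_sub] at h1 ⊢
        linear_combination h1 + hkey
lemma constCoeff_one_sub (n : ℕ) (hn : 1 ≤ n) :
    constantCoeff (1 - (X : PowerSeries ℚ) ^ n) = 1 := by
  simp only [map_sub, map_one, map_pow, constantCoeff_X]
  rw [zero_pow (by omega : n ≠ 0)]
  ring

lemma one_sub_mul_inv (n : ℕ) (hn : 1 ≤ n) :
    (1 - (X : PowerSeries ℚ) ^ n) * (1 - (X : PowerSeries ℚ) ^ n)⁻¹ = 1 :=
  PowerSeries.mul_inv_cancel _ (by rw [constCoeff_one_sub n hn]; norm_num)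

lemma dFac_succ (n : ℕ) (hn : 1 ≤ n) (k : ℤ) :
    dFac n (k+1) = dFac n k * (1 - (X : PowerSeries ℚ) ^ n)⁻¹ := by
  rcases le_or_gt 0 k with hk | hk
  · rw [dFac, dFac, if_pos hk, if_pos (by omega), Int.toNat_add hk (by norm_num)]
    norm_num [pow_succ]
  · rcases eq_or_lt_of_le (by omega : k ≤ -1) with hk1 | hk1
    · subst hk1
      rw [dFac, dFac, if_pos (by norm_num), if_neg (by norm_num)]
      norm_num
      exact (one_sub_mul_inv n hn).symm
    · rw [dFac, dFac, if_neg (by omega), if_neg (by omega)]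
      have h1 : (-k).toNat = (-(k+1)).toNat + 1 := by omega
      rw [h1, pow_succ, mul_assoc, one_sub_mul_inv n hn, mul_one]
def HasPolyCoeff (F : ℤ → PowerSeries ℚ) : Prop :=
  ∀ c : ℕ, ∃ D : Polynomial ℚ, D.degree ≤ (c : ℕ) ∧
    ∀ k : ℤ, PowerSeries.coeff c (F k) = D.eval (k : ℚ)

lemma const_of_diff (g : ℤ → ℚ) (h : ∀ k : ℤ, g (k+1) = g k) : ∀ k : ℤ, g k = g 0 := by
  intro k
  induction k using Int.induction_on with
  | zero => rfl
  | succ n ih => rw [h n]; exact ih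
  | pred n ih => rw [← ih, ← h (-n-1)]; norm_num

lemma poly_of_diff (d : ℕ) (g : ℤ → ℚ) (H : Polynomial ℚ) (hH : H.degree ≤ (d:ℕ))
    (hdiff : ∀ k : ℤ, g (k+1) - g k = H.eval (k : ℚ)) :
    ∃ D : Polynomial ℚ, D.degree ≤ (d+1 : ℕ) ∧ ∀ k : ℤ, g k = D.eval (k : ℚ) := by
  obtain ⟨G, hG, hGe⟩ := exists_antidiff d H hH
  refine ⟨G + Polynomial.C (g 0 - G.eval 0), ?_, ?_⟩
  · apply (Polynomial.degree_add_le _ _).trans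
    apply max_le hG (Polynomial.degree_C_le.trans ?_)
    exact_mod_cast Nat.zero_le (d+1)
  · have key : ∀ k : ℤ, g k - G.eval (k:ℚ) = g 0 - G.eval 0 := by
      apply const_of_diff (fun k => g k - G.eval (k:ℚ))
      intro k
      have h1 := hdiff k
      have h2 := hGe (k : ℚ)
      push_cast
      linarith
    intro k
    have := key k
    simp only [Polynomial.eval_add, Polynomial.eval_C]
    linarith

lemma dFac_hasPolyCoeff (n : ℕ) (hn : 1 ≤ n) : HasPolyCoeff (dFac n) := by
  intro c
  induction c using Nat.strong_induction_on with
  | _ c ih =>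
  have hinv : (1 - (X : PowerSeries ℚ) ^ n)⁻¹ * (1 - (X : PowerSeries ℚ) ^ n) = 1 :=
    PowerSeries.inv_mul_cancel _ (by rw [constCoeff_one_sub n hn]; norm_num)
  have hdiffser : ∀ k : ℤ, dFac n (k+1) - dFac n k
      = (X : PowerSeries ℚ)^n * dFac n (k+1) := by
    intro k
    rw [dFac_succ n hn k]
    linear_combination (dFac n k) * hinv
  by_cases hc : c < n
  · refine ⟨Polynomial.C (PowerSeries.coeff c (dFac n 0)), ?_, ?_⟩
    · exact Polynomial.degree_C_le.trans (by exact_mod_cast Nat.zero_le c)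
    · intro k
      have := const_of_diff (fun k => PowerSeries.coeff c (dFac n k)) (fun k => by
        have h1 := congrArg (PowerSeries.coeff c) (hdiffser k)
        rw [map_sub, PowerSeries.coeff_X_pow_mul'] at h1
        rw [if_neg (by omega)] at h1
        linarith) k
      rw [this]
      simp
  · push_neg at hc
    obtain ⟨D', hD'deg, hD'e⟩ := ih (c - n) (by omega)
    set H := D'.comp (Polynomial.X + 1) with hHdef
    have hHdeg : H.degree ≤ ((c - n : ℕ) : WithBot ℕ) := by
      rw [← Polynomial.natDegree_le_iff_degree_le]
      apply (Polynomial.natDegree_comp_le).trans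
      calc D'.natDegree * (Polynomial.X + 1 : Polynomial ℚ).natDegree
          ≤ (c-n) * 1 := Nat.mul_le_mul (Polynomial.natDegree_le_iff_degree_le.mpr hD'deg)
            (Polynomial.natDegree_le_iff_degree_le.mpr ((Polynomial.degree_add_le _ _).trans
              (max_le Polynomial.degree_X_le (Polynomial.degree_one_le.trans
                (by exact_mod_cast Nat.zero_le 1)))))
        _ = c - n := by omega
    have hdiff : ∀ k : ℤ, PowerSeries.coeff c (dFac n (k+1))
        - PowerSeries.coeff c (dFac n k) = H.eval (k : ℚ) := by
      intro k
      have h1 := congrArg (PowerSeries.coeff c) (hdiffser k)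
      rw [map_sub, PowerSeries.coeff_X_pow_mul', if_pos (by omega)] at h1
      rw [h1, hHdef, Polynomial.eval_comp]
      simp only [Polynomial.eval_add, Polynomial.eval_X, Polynomial.eval_one]
      rw [hD'e (k+1)]
      push_cast
      ring_nf
    obtain ⟨D, hDdeg, hDe⟩ := poly_of_diff (c - n) (fun k => PowerSeries.coeff c (dFac n k)) H hHdeg hdiff
    have hle : ((c - n + 1 : ℕ) : WithBot ℕ) ≤ ((c : ℕ) : WithBot ℕ) := by
      exact_mod_cast (by omega : c - n + 1 ≤ c)
    exact ⟨D, hDdeg.trans hle, hDe⟩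

lemma HasPolyCoeff.mul {F G : ℤ → PowerSeries ℚ} (hF : HasPolyCoeff F)
    (hG : HasPolyCoeff G) : HasPolyCoeff (fun k => F k * G k) := by
  choose DF hFdeg hFe using hF
  choose DG hGdeg hGe using hG
  intro c
  refine ⟨∑ p ∈ Finset.HasAntidiagonal.antidiagonal c, DF p.1 * DG p.2, ?_, ?_⟩
  · apply (Polynomial.degree_sum_le _ _).trans
    apply Finset.sup_le
    intro p hp
    have hpc : p.1 + p.2 = c := Finset.HasAntidiagonal.mem_antidiagonal.mp hp
    apply (Polynomial.degree_mul_le _ _).trans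
    calc (DF p.1).degree + (DG p.2).degree ≤ ((p.1 : ℕ) : WithBot ℕ) + ((p.2 : ℕ) : WithBot ℕ) :=
        add_le_add (hFdeg p.1) (hGdeg p.2)
      _ = ((p.1 + p.2 : ℕ) : WithBot ℕ) := by exact_mod_cast rfl
      _ = (c : WithBot ℕ) := by rw [hpc]
  · intro k
    rw [PowerSeries.coeff_mul, Polynomial.eval_finset_sum]
    exact Finset.sum_congr rfl fun p _ => by
      rw [hFe p.1 k, hGe p.2 k, Polynomial.eval_mul]

lemma hasPolyCoeff_one : HasPolyCoeff (fun _ => (1 : PowerSeries ℚ)) := by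
  intro c
  refine ⟨if c = 0 then 1 else 0, ?_, ?_⟩
  · split_ifs
    · exact Polynomial.degree_one_le.trans (by exact_mod_cast Nat.zero_le c)
    · rw [Polynomial.degree_zero]; exact bot_le
  · intro k
    rw [PowerSeries.coeff_one]
    split_ifs <;> simp

lemma hasPolyCoeff_prod {a : ℕ} (f : Fin a → ℕ) (hf : ∀ j, 1 ≤ f j) :
    HasPolyCoeff (fun k => ∏ j, dFac (f j) k) := by
  suffices h : ∀ s : Finset (Fin a), HasPolyCoeff (fun k => ∏ j ∈ s, dFac (f j) k) from h univ
  intro s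
  induction s using Finset.induction_on with
  | empty => simpa using hasPolyCoeff_one
  | insert _ _ hx ih =>
    simp only [Finset.prod_insert hx]
    exact (dFac_hasPolyCoeff _ (hf _)).mul ih

/-- The polynomial (by choice) whose evaluation at `k` gives
`coeff ℓ (∏ j, dFac (f j) k)`, for tuples with positive entries. -/
def prodD {a : ℕ} (f : Fin a → ℕ) (ℓ : ℕ) : Polynomial ℚ :=
  if h : ∀ j, 1 ≤ f j then (hasPolyCoeff_prod f h ℓ).choose else 0

lemma prodD_degree {a : ℕ} (f : Fin a → ℕ) (ℓ : ℕ) : (prodD f ℓ).degree ≤ (ℓ : ℕ) := by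
  rw [prodD]
  split_ifs with h
  · exact (hasPolyCoeff_prod f h ℓ).choose_spec.1
  · rw [Polynomial.degree_zero]; exact bot_le

lemma prodD_eval {a : ℕ} (f : Fin a → ℕ) (ℓ : ℕ) (h : ∀ j, 1 ≤ f j) (k : ℤ) :
    PowerSeries.coeff ℓ (∏ j, dFac (f j) k) = (prodD f ℓ).eval (k : ℚ) := by
  rw [prodD, dif_pos h]
  exact (hasPolyCoeff_prod f h ℓ).choose_spec.2 k

def Ppoly (a ℓ m n : ℕ) : Polynomial ℚ :=
  ∑ f ∈ (strictTuples a n).filter (fun f => (∑ j, f j) = n ∧ (∑ j, (f j)^2) = m), prodD f ℓ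

lemma Ppoly_degree (a ℓ m n : ℕ) : (Ppoly a ℓ m n).degree ≤ (ℓ : ℕ) := by
  apply (Polynomial.degree_sum_le _ _).trans
  exact Finset.sup_le fun f _ => prodD_degree f ℓ

/-- The exponent `r·Σf² + s·Σf`. -/
def Eexp {a : ℕ} (r s : ℕ) (f : Fin a → ℕ) : ℕ := r * (∑ j, (f j)^2) + s * ∑ j, f j

lemma mem_strictTuples {a N : ℕ} {f : Fin a → ℕ} :
    f ∈ strictTuples a N ↔ (∀ j, 1 ≤ f j ∧ f j ≤ N) ∧ StrictMono f := by
  simp [strictTuples, Fintype.mem_piFinset, Finset.mem_Icc]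

lemma entry_le_sum {a : ℕ} (f : Fin a → ℕ) (j : Fin a) : f j ≤ ∑ i, f i :=
  Finset.single_le_sum (fun i _ => Nat.zero_le (f i)) (Finset.mem_univ j)

lemma sum_ge_gauss {a : ℕ} {f : Fin a → ℕ} (h1 : ∀ j, 1 ≤ f j) (h2 : StrictMono f) :
    a * (a + 1) / 2 ≤ ∑ j, f j := by
  have key : ∀ v : ℕ, ∀ hv : v < a, v + 1 ≤ f ⟨v, hv⟩ := by
    intro v
    induction v with
    | zero => intro hv; exact h1 ⟨0, hv⟩
    | succ v ih =>
      intro hv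
      have hlt : (⟨v, by omega⟩ : Fin a) < ⟨v+1, hv⟩ := by
        simp [Fin.lt_def]
      have := h2 hlt
      have := ih (by omega)
      omega
  have hle : ∑ j : Fin a, (j.1 + 1) ≤ ∑ j, f j :=
    Finset.sum_le_sum fun j _ => key j.1 j.2
  have heq : ∑ j : Fin a, (j.1 + 1) = ∑ i ∈ Finset.range a, (i + 1) :=
    Fin.sum_univ_eq_sum_range (fun i => i + 1) a
  have hsplit : ∑ i ∈ Finset.range a, (i + 1) = (∑ i ∈ Finset.range a, i) + a := by
    rw [Finset.sum_add_distrib, Finset.sum_const, Finset.card_range, smul_eq_mul, mul_one]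
  have hgauss : a * (a + 1) = ((∑ i ∈ Finset.range a, i) + a) * 2 := by
    have h := Finset.sum_range_id_mul_two (a + 1)
    rw [Finset.sum_range_succ] at h
    simp only [Nat.add_sub_cancel, Nat.mul_comm (a+1) a] at h
    omega
  have hdiv : a * (a + 1) / 2 = (∑ i ∈ Finset.range a, i) + a := by
    rw [hgauss]; omega
  rw [hdiv]
  omega

lemma sq_sum_le {a : ℕ} (f : Fin a → ℕ) : (∑ j, f j) ^ 2 ≤ a * ∑ j, (f j) ^ 2 := by
  have h : ((∑ j, f j : ℕ) : ℚ) ^ 2 ≤ ((a : ℚ)) * ((∑ j, (f j)^2 : ℕ) : ℚ) := by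
    push_cast
    have := sq_sum_le_card_mul_sum_sq (s := (Finset.univ : Finset (Fin a)))
      (f := fun j => (f j : ℚ))
    simpa using this
  exact_mod_cast h

lemma sum_sq_le {a : ℕ} (f : Fin a → ℕ) : (∑ j, (f j) ^ 2) ≤ (∑ j, f j) ^ 2 := by
  calc ∑ j, (f j)^2 ≤ ∑ j, f j * ∑ i, f i :=
      Finset.sum_le_sum fun j _ => by
        rw [pow_two]; exact Nat.mul_le_mul_left _ (entry_le_sum f j)
    _ = (∑ j, f j) * (∑ i, f i) := by rw [← Finset.sum_mul]
    _ = (∑ j, f j) ^ 2 := (pow_two _).symm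


/-- Theorem 1.3, `ℬ`-part.  For `a ∈ ℕ` (positive) there exist polynomials
`P_{a,ℓ,m,n}`, indexed by `ℓ ≥ 0`, `n ≥ a(a+1)/2` and `n²/a ≤ m ≤ n²`, each of degree at most
`ℓ`, such that for all `k ∈ ℤ`, `r, s ∈ ℕ` (positive) and `N ∈ ℕ₀` one has
`d_{a,k,r,s}(N) = Σ_{(ℓ,m,n) : n ≥ a(a+1)/2, n²/a ≤ m ≤ n², mr+ns+ℓ = N} P_{a,ℓ,m,n}(k)`.
(The condition `n²/a ≤ m` is phrased as `n² ≤ a·m`.) -/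
theorem B_coeff_polynomial_family (a : ℕ) (ha : 1 ≤ a) :
    ∃ P : ℕ → ℕ → ℕ → Polynomial ℚ,
      (∀ ℓ m n : ℕ, (P ℓ m n).degree ≤ (ℓ : ℕ)) ∧
      ∀ (k : ℤ) (r s : ℕ), 1 ≤ r → 1 ≤ s → ∀ N : ℕ,
        Bcoeff a k r s N =
          ∑ t ∈ (Finset.range (N + 1) ×ˢ Finset.range (N + 1) ×ˢ Finset.range (N + 1)).filter
              (fun t => a * (a + 1) / 2 ≤ t.2.2 ∧ t.2.2 ^ 2 ≤ a * t.2.1 ∧ t.2.1 ≤ t.2.2 ^ 2 ∧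
                t.2.1 * r + t.2.2 * s + t.1 = N),
            (P t.1 t.2.1 t.2.2).eval (k : ℚ) := by
  refine ⟨Ppoly a, fun ℓ m n => Ppoly_degree a ℓ m n, ?_⟩
  intro k r s hr hs N
  set S := (Finset.range (N + 1) ×ˢ Finset.range (N + 1) ×ˢ Finset.range (N + 1)).filter
      (fun t => a * (a + 1) / 2 ≤ t.2.2 ∧ t.2.2 ^ 2 ≤ a * t.2.1 ∧ t.2.1 ≤ t.2.2 ^ 2 ∧
        t.2.1 * r + t.2.2 * s + t.1 = N) with hS
  set A := (strictTuples a N).filter (fun f => Eexp r s f ≤ N) with hA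
  -- Step 1
  have step1 : Bcoeff a k r s N = ∑ f ∈ A, (prodD f (N - Eexp r s f)).eval (k : ℚ) := by
    rw [Bcoeff, hA, Finset.sum_filter]
    apply Finset.sum_congr rfl
    intro f hf
    have hf1 : ∀ j, 1 ≤ f j := fun j => (mem_strictTuples.mp hf).1 j |>.1
    have hEf : r * (∑ j, (f j)^2) + s * ∑ j, f j = Eexp r s f := rfl
    rw [hEf, PowerSeries.coeff_X_pow_mul']
    by_cases h : Eexp r s f ≤ N
    · rw [if_pos h, if_pos h, prodD_eval f (N - Eexp r s f) hf1 k]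
    · rw [if_neg h, if_neg h]
  -- the fiber map
  have hmaps : ∀ f ∈ A, (N - Eexp r s f, ((∑ j, (f j)^2 : ℕ), (∑ j, f j : ℕ))) ∈ S := by
    intro f hf
    rw [hA, Finset.mem_filter] at hf
    obtain ⟨hfT, hfE⟩ := hf
    obtain ⟨hf1, hfmono⟩ := mem_strictTuples.mp hfT
    have hEf : Eexp r s f = r * (∑ j, (f j)^2) + s * ∑ j, f j := rfl
    have hmN : (∑ j, (f j)^2) ≤ N := by
      have h1 : (∑ j, (f j)^2) ≤ r * (∑ j, (f j)^2) :=
        Nat.le_mul_of_pos_left _ (by omega)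
      omega
    have hnN : (∑ j, f j) ≤ N := by
      have h1 : (∑ j, f j) ≤ s * (∑ j, f j) :=
        Nat.le_mul_of_pos_left _ (by omega)
      omega
    rw [hS, Finset.mem_filter]
    refine ⟨?_, ?_, ?_, ?_, ?_⟩
    · rw [Finset.mem_product, Finset.mem_product]
      refine ⟨Finset.mem_range.mpr ?_, Finset.mem_range.mpr ?_, Finset.mem_range.mpr ?_⟩
      · show N - Eexp r s f < N + 1
        omega
      · show (∑ j, (f j)^2) < N + 1
        omega
      · show (∑ j, f j) < N + 1
        omega
    · exact sum_ge_gauss (fun j => (hf1 j).1) hfmono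
    · exact sq_sum_le f
    · exact sum_sq_le f
    · show (∑ j, (f j)^2) * r + (∑ j, f j) * s + (N - Eexp r s f) = N
      have h2 : Eexp r s f = (∑ j, (f j)^2) * r + (∑ j, f j) * s := by rw [hEf]; ring
      omega
  rw [step1, ← Finset.sum_fiberwise_of_maps_to hmaps
    (fun f => (prodD f (N - Eexp r s f)).eval (k : ℚ))]
  apply Finset.sum_congr rfl
  intro t ht
  -- unpack t ∈ S
  rw [hS, Finset.mem_filter, Finset.mem_product, Finset.mem_product] at ht
  obtain ⟨⟨ht1, ht2, ht3⟩, htgauss, htcs, htsq, htN⟩ := ht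
  obtain ⟨ℓ, m, n⟩ := t
  rw [Finset.mem_range] at ht1 ht2 ht3
  simp only at htgauss htcs htsq htN ht1 ht2 ht3 ⊢
  -- the two finsets agree
  have hsets : A.filter
        (fun f => (N - Eexp r s f, ((∑ j, (f j)^2 : ℕ), (∑ j, f j : ℕ))) = (ℓ, m, n))
      = (strictTuples a n).filter (fun f => (∑ j, f j) = n ∧ (∑ j, (f j)^2) = m) := by
    ext f
    simp only [hA, Finset.mem_filter]
    constructor
    · rintro ⟨⟨hfT, hfE⟩, hfι⟩
      obtain ⟨hf1, hfmono⟩ := mem_strictTuples.mp hfT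
      have h1 : N - Eexp r s f = ℓ := congrArg Prod.fst hfι
      have h2 : (∑ j, (f j)^2) = m := congrArg (fun p => p.2.1) hfι
      have h3 : (∑ j, f j) = n := congrArg (fun p => p.2.2) hfι
      refine ⟨mem_strictTuples.mpr ⟨fun j => ⟨(hf1 j).1, ?_⟩, hfmono⟩, h3, h2⟩
      rw [← h3]; exact entry_le_sum f j
    · rintro ⟨hfT, hfn, hfm⟩
      obtain ⟨hf1, hfmono⟩ := mem_strictTuples.mp hfT
      have hEf : Eexp r s f = m * r + n * s := by
        show r * (∑ j, (f j)^2) + s * ∑ j, f j = m * r + n * s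
        rw [hfn, hfm]; ring
      have hENle : Eexp r s f ≤ N := by omega
      have hNE : N - Eexp r s f = ℓ := by omega
      refine ⟨⟨mem_strictTuples.mpr ⟨fun j => ⟨(hf1 j).1, ?_⟩, hfmono⟩, hENle⟩, ?_⟩
      · have := entry_le_sum f j
        omega
      · rw [hNE, hfn, hfm]
  rw [hsets, Ppoly, Polynomial.eval_finset_sum]
  apply Finset.sum_congr rfl
  intro f hf
  rw [Finset.mem_filter] at hf
  obtain ⟨hfT, hfn, hfm⟩ := hf
  have hEf : Eexp r s f = m * r + n * s := by
    show r * (∑ j, (f j)^2) + s * ∑ j, f j = m * r + n * s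
    rw [hfn, hfm]; ring
  have hNE : N - Eexp r s f = ℓ := by omega
  rw [hNE]
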